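/- As z → 0+, the polynomial λ^k − z^{-1}(λ^{k−1} + ⋯ + λ + 1) has one root satisfying λ = z^{-1}(1 + O_k(z)), and the other k−1 roots satisfy λ = ω(1 + O_k(z)) for the distinct kth roots of unity ω ≠ 1. -/

import Mathlib

open Polynomial
open Finset Metric Set

noncomputable def Complex.abs : AbsoluteValue ℂ ℝ := NormedField.toAbsoluteValue ℂ

lemma Complex.norm_eq_abs (z : ℂ) : ‖z‖ = Complex.abs z := rfl

lemma Complex.abs_ofReal (r : ℝ) : Complex.abs (r : ℂ) = |r| := Complex.norm_real r

lemma Complex.abs_natCast (n : ℕ) : Complex.abs (n : ℂ) = n := Complex.norm_natCast n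

private lemma geom_zero {k : ℕ} {ζ : ℂ} (h1 : ζ ^ k = 1) (h2 : ζ ≠ 1) :
    ∑ i ∈ range k, ζ ^ i = 0 := by
  have := geom_sum_mul ζ k
  rw [h1, sub_self] at this
  rcases mul_eq_zero.mp this with h | h
  · exact h
  · exact absurd (sub_eq_zero.mp h) h2

private lemma root_abs_one {k : ℕ} (hk : 1 ≤ k) {ω : ℂ} (h : ω ^ k = 1) : Complex.abs ω = 1 := by
  have h1 : Complex.abs ω ^ k = 1 := by rw [← map_pow, h, map_one]
  have h0 := Complex.abs.nonneg ω
  rcases lt_trichotomy (Complex.abs ω) 1 with h' | h' | h'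
  · have := pow_lt_one₀ h0 h' (by omega : k ≠ 0); linarith
  · exact h'
  · have := one_lt_pow₀ h' (by omega : k ≠ 0); linarith

private lemma sep_one {k : ℕ} (hk : 2 ≤ k) {ζ : ℂ} (h1 : ζ ^ k = 1) (h2 : ζ ≠ 1) :
    1 / (k : ℝ) ≤ Complex.abs (1 - ζ) := by
  have hζ : Complex.abs ζ = 1 := root_abs_one (by omega) h1
  have hsum : ∑ i ∈ range k, ζ ^ i = 0 := geom_zero h1 h2
  have hkey : (k : ℂ) = ∑ i ∈ range k, (1 - ζ ^ i) := by
    rw [Finset.sum_sub_distrib, hsum, sub_zero, Finset.sum_const, card_range]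
    simp
  have hterm : ∀ i ∈ range k, Complex.abs (1 - ζ ^ i) ≤ (k : ℝ) * Complex.abs (1 - ζ) := by
    intro i hi
    have hgeo : (1 - ζ) * ∑ j ∈ range i, ζ ^ j = 1 - ζ ^ i := by
      have := geom_sum_mul ζ i
      linear_combination -this
    calc Complex.abs (1 - ζ ^ i) = Complex.abs (1 - ζ) * Complex.abs (∑ j ∈ range i, ζ ^ j) := by
          rw [← map_mul, hgeo]
      _ ≤ Complex.abs (1 - ζ) * (k : ℝ) := by
          gcongr
          calc Complex.abs (∑ j ∈ range i, ζ ^ j) ≤ ∑ j ∈ range i, Complex.abs (ζ ^ j) :=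
                Complex.abs.sum_le _ _
            _ = (i : ℝ) := by simp [map_pow, hζ]
            _ ≤ (k : ℝ) := by exact_mod_cast (Finset.mem_range.mp hi).le
      _ = (k : ℝ) * Complex.abs (1 - ζ) := mul_comm _ _
  have habs : (k : ℝ) ≤ ∑ i ∈ range k, Complex.abs (1 - ζ ^ i) := by
    calc (k:ℝ) = Complex.abs (k : ℂ) := by rw [Complex.abs_natCast]
      _ = Complex.abs (∑ i ∈ range k, (1 - ζ ^ i)) := by rw [← hkey]
      _ ≤ ∑ i ∈ range k, Complex.abs (1 - ζ ^ i) := Complex.abs.sum_le _ _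
  have hsum2 : ∑ i ∈ range k, Complex.abs (1 - ζ ^ i) ≤ (k:ℝ) * ((k:ℝ) * Complex.abs (1 - ζ)) := by
    calc ∑ i ∈ range k, Complex.abs (1 - ζ ^ i) ≤ ∑ i ∈ range k, (k : ℝ) * Complex.abs (1 - ζ) :=
          Finset.sum_le_sum hterm
      _ = (k:ℝ) * ((k:ℝ) * Complex.abs (1 - ζ)) := by rw [Finset.sum_const, card_range]; ring
  have hkpos : (0:ℝ) < k := by positivity
  have h3 : (k:ℝ) * 1 ≤ (k:ℝ) * ((k:ℝ) * Complex.abs (1 - ζ)) := by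
    rw [mul_one]; exact le_trans habs hsum2
  have h4 : 1 ≤ (k:ℝ) * Complex.abs (1 - ζ) := le_of_mul_le_mul_left h3 hkpos
  rw [div_le_iff₀ hkpos]
  linarith [h4, mul_comm (k:ℝ) (Complex.abs (1 - ζ))]

private lemma sep_pair {k : ℕ} (hk : 2 ≤ k) {a b : ℂ} (ha : a ^ k = 1) (hb : b ^ k = 1)
    (hab : a ≠ b) : 1 / (k : ℝ) ≤ Complex.abs (a - b) := by
  have ha0 : a ≠ 0 := fun h => by simp [h, zero_pow (by omega : k ≠ 0)] at ha
  set ζ := b * a⁻¹ with hζdef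
  have hζk : ζ ^ k = 1 := by
    rw [hζdef, mul_pow, inv_pow, ha, hb, inv_one, mul_one]
  have hζ1 : ζ ≠ 1 := by
    intro h
    apply hab
    exact ((mul_inv_eq_one₀ ha0).mp h).symm
  have : a - b = a * (1 - ζ) := by
    rw [hζdef, mul_sub, mul_one, mul_left_comm, mul_inv_cancel₀ ha0, mul_one]
  rw [this, map_mul, root_abs_one (by omega) ha, one_mul]
  exact sep_one hk hζk hζ1

private lemma fixedpt_ball (f : ℂ → ℂ) (x₀ : ℂ) (r : ℝ) (hr : 0 ≤ r)
    (hmaps : MapsTo f (closedBall x₀ r) (closedBall x₀ r))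
    (hlip : LipschitzOnWith (1/2 : NNReal) f (closedBall x₀ r)) :
    ∃ x ∈ closedBall x₀ r, f x = x := by
  have hsc : IsComplete (closedBall x₀ r) := (isClosed_closedBall).isComplete
  have hc : ContractingWith (1/2) (hmaps.restrict f _ _) :=
    ⟨by rw [show ((1:NNReal)/2) = 2⁻¹ by norm_num]; exact inv_lt_one_of_one_lt₀ one_lt_two,
      hlip.mapsToRestrict hmaps⟩
  obtain ⟨y, hy, hfy, -⟩ :=
    ContractingWith.exists_fixedPoint' hsc hmaps hc (Metric.mem_closedBall_self hr)
      (edist_ne_top _ _)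
  exact ⟨y, hy, hfy⟩

private lemma mvt_ball {f f' : ℂ → ℂ} {c : ℂ} {r C : ℝ}
    (hf : ∀ x ∈ closedBall c r, HasDerivAt f (f' x) x)
    (hb : ∀ x ∈ closedBall c r, ‖f' x‖ ≤ C)
    {a b : ℂ} (ha : a ∈ closedBall c r) (hb' : b ∈ closedBall c r) :
    ‖f b - f a‖ ≤ C * ‖b - a‖ :=
  (convex_closedBall c r).norm_image_sub_le_of_norm_hasDerivWithin_le
    (fun x hx => (hf x hx).hasDerivWithinAt) hb ha hb'

private lemma small_root {k : ℕ} (hk : 2 ≤ k) {z : ℝ} (hz : 0 < z)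
    (hz2 : z ≤ 1/2) (hzA : (2:ℝ)^(k+3) * k^3 * z ≤ 1/2)
    {ω : ℂ} (hωk : ω ^ k = 1) (hω1 : ω ≠ 1) :
    ∃ l : ℂ, Complex.abs (l - ω) ≤ 2 * z ∧
      ∑ i ∈ range k, l ^ i = (z:ℂ) * l ^ k := by
  have hk1 : (1:ℝ) ≤ k := by exact_mod_cast Nat.one_le_of_lt hk
  have hkR : (0:ℝ) < k := by linarith
  have hωabs : Complex.abs ω = 1 := root_abs_one (by omega) hωk
  have hgω : ∑ i ∈ range k, ω ^ i = 0 := geom_zero hωk hω1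
  set g : ℂ → ℂ := fun x => ∑ i ∈ range k, x ^ i with hgdef
  set gd : ℂ → ℂ := fun x => ∑ i ∈ range k, (i:ℂ) * x ^ (i-1) with hgddef
  set D : ℂ := gd ω with hDdef
  have hgderiv : ∀ x : ℂ, HasDerivAt g (gd x) x :=
    fun x => HasDerivAt.fun_sum (fun i _ => hasDerivAt_pow i x)
  -- identity D * (ω - 1) = k * ω^(k-1)
  have hDid : D * (ω - 1) = (k:ℂ) * ω ^ (k-1) := by
    have hF1 : HasDerivAt (fun lam : ℂ => (∑ i ∈ range k, lam ^ i) * (lam - 1))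
        (D * (ω - 1) + (∑ i ∈ range k, ω ^ i) * 1) ω :=
      (hgderiv ω).mul ((hasDerivAt_id ω).sub_const 1)
    have hF2 : HasDerivAt (fun lam : ℂ => (∑ i ∈ range k, lam ^ i) * (lam - 1))
        ((k:ℂ) * ω ^ (k-1)) ω := by
      have heq : (fun lam : ℂ => (∑ i ∈ range k, lam ^ i) * (lam - 1))
          = fun lam : ℂ => lam ^ k - 1 := funext fun lam => geom_sum_mul lam k
      rw [heq]
      simpa using (hasDerivAt_pow k ω).sub_const 1
    have := hF1.unique hF2
    rw [hgω] at this
    linear_combination this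
  -- |D| ≥ k/2
  have hDabs : (k:ℝ)/2 ≤ Complex.abs D := by
    have h1 : Complex.abs D * Complex.abs (ω - 1) = (k:ℝ) := by
      have := congrArg Complex.abs hDid
      rw [map_mul, map_mul, map_pow, hωabs, one_pow, mul_one] at this
      simpa [Complex.abs_natCast] using this
    have h2 : Complex.abs (ω - 1) ≤ 2 := by
      calc Complex.abs (ω - 1) ≤ Complex.abs ω + Complex.abs 1 := by
            simpa using Complex.abs.sub_le ω 0 1
        _ = 2 := by rw [hωabs, map_one]; norm_num
    nlinarith [Complex.abs.nonneg D, Complex.abs.nonneg (ω - 1)]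
  have hD0 : D ≠ 0 := by
    intro h
    rw [h, map_zero] at hDabs
    linarith
  -- the iteration map
  set Φ : ℂ → ℂ := fun x => x - (g x - (z:ℂ) * x ^ k) / D with hΦdef
  set Φd : ℂ → ℂ := fun x => 1 - (gd x - (z:ℂ) * ((k:ℂ) * x ^ (k-1))) / D with hΦddef
  have hΦderiv : ∀ x : ℂ, HasDerivAt Φ (Φd x) x := fun x =>
    (hasDerivAt_id x).sub (((hgderiv x).sub ((hasDerivAt_pow k x).const_mul (z:ℂ))).div_const D)
  -- bound |Φd x| on the ball
  have hball_abs : ∀ x : ℂ, x ∈ closedBall ω (2*z) → Complex.abs x ≤ 2 := by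
    intro x hx
    rw [mem_closedBall, Complex.dist_eq, Complex.norm_eq_abs] at hx
    calc Complex.abs x = Complex.abs (x - ω + ω) := by ring_nf
      _ ≤ Complex.abs (x - ω) + Complex.abs ω := Complex.abs.add_le _ _
      _ ≤ 2*z + 1 := by rw [hωabs]; linarith
      _ ≤ 2 := by linarith
  -- |gd x - gd ω| ≤ C₂ |x - ω| for x in ball, via MVT on closedBall 0 2
  have hgd_lip : ∀ x ∈ closedBall ω (2*z),
      Complex.abs (gd x - gd ω) ≤ ((k:ℝ)^3 * 2^k) * Complex.abs (x - ω) := by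
    intro x hx
    have hxm : x ∈ closedBall (0:ℂ) 2 := by
      rw [mem_closedBall, Complex.dist_eq, sub_zero]; exact hball_abs x hx
    have hωm : ω ∈ closedBall (0:ℂ) 2 := by
      rw [mem_closedBall, Complex.dist_eq, sub_zero, Complex.norm_eq_abs, hωabs]; norm_num
    exact mvt_ball (f' := fun x => ∑ i ∈ range k, (i:ℂ) * (((i-1 : ℕ):ℂ) * x ^ (i-1-1)))
      (fun y _ => HasDerivAt.fun_sum (fun i _ => (hasDerivAt_pow (i-1) y).const_mul (i:ℂ)))
      (fun y hy => by
        have hyabs : Complex.abs y ≤ 2 := by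
          rw [mem_closedBall, Complex.dist_eq, sub_zero] at hy; exact hy
        calc ‖∑ i ∈ range k, (i:ℂ) * (((i-1 : ℕ):ℂ) * y ^ (i-1-1))‖
            ≤ ∑ i ∈ range k, ‖(i:ℂ) * (((i-1 : ℕ):ℂ) * y ^ (i-1-1))‖ :=
              norm_sum_le _ _
          _ ≤ ∑ _i ∈ range k, (k:ℝ) * ((k:ℝ) * 2^k) := by
              apply Finset.sum_le_sum
              intro i hi
              rw [norm_mul, norm_mul, norm_pow]
              have hilt : i < k := mem_range.mp hi
              have hik : (i:ℝ) ≤ k := by exact_mod_cast hilt.le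
              have hik' : ((i-1:ℕ):ℝ) ≤ k := by
                have : i - 1 ≤ k := by omega
                exact_mod_cast this
              have hyp : ‖y‖ ^ (i-1-1) ≤ 2^k := by
                calc ‖y‖ ^ (i-1-1) ≤ 2 ^ (i-1-1) :=
                      pow_le_pow_left₀ (norm_nonneg y) hyabs _
                  _ ≤ 2^k := pow_le_pow_right₀ one_le_two (by omega)
              have h0 : (0:ℝ) ≤ ‖y‖ ^ (i-1-1) := by positivity
              have hni : ‖(i:ℂ)‖ = (i:ℝ) := by simp
              have hni' : ‖((i-1:ℕ):ℂ)‖ = ((i-1:ℕ):ℝ) := by simp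
              rw [hni, hni']
              have hint : ((i-1:ℕ):ℝ) * ‖y‖^(i-1-1) ≤ (k:ℝ) * 2^k := by
                apply mul_le_mul hik' hyp h0 (by positivity)
              apply mul_le_mul hik hint (by positivity) (by positivity)
          _ = (k:ℝ) * ((k:ℝ) * ((k:ℝ) * 2^k)) := by
              rw [Finset.sum_const, card_range]; push_cast; ring
          _ = (k:ℝ)^3 * 2^k := by ring)
      hωm hxm
  have hP0 : (0:ℝ) < 2^k := by positivity
  have hA8 : (2:ℝ)^(k+3) = 2^k * 8 := by rw [pow_add]; norm_num
  have hzA' : (k:ℝ)^3 * 2^k * z ≤ 1/16 := by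
    rw [hA8] at hzA; nlinarith
  have hzA'' : (k:ℝ) * 2^k * z ≤ 1/16 := by
    have hkk : (k:ℝ) ≤ (k:ℝ)^3 := by
      have h1 : (0:ℝ) ≤ (k:ℝ) * ((k:ℝ) - 1) * ((k:ℝ) + 1) :=
        mul_nonneg (mul_nonneg hkR.le (by linarith)) (by linarith)
      nlinarith
    have h2 : (0:ℝ) ≤ ((k:ℝ)^3 - k) * 2^k * z :=
      mul_nonneg (mul_nonneg (sub_nonneg.mpr hkk) hP0.le) hz.le
    nlinarith
  -- derivative bound for Φ on the ball
  have hΦbound : ∀ x ∈ closedBall ω (2*z), ‖Φd x‖ ≤ 1/2 := by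
    intro x hx
    have hxabs := hball_abs x hx
    have hdist : Complex.abs (x - ω) ≤ 2*z := by
      rw [mem_closedBall, Complex.dist_eq] at hx; exact hx
    have hΦd_eq : Φd x = (D - gd x + (z:ℂ)*((k:ℂ)*x^(k-1))) / D := by
      rw [hΦddef]
      field_simp
      ring
    have hnum : Complex.abs (D - gd x + (z:ℂ)*((k:ℂ)*x^(k-1)))
        ≤ (k:ℝ)^3*2^k*(2*z) + z*((k:ℝ)*2^k) := by
      calc Complex.abs (D - gd x + (z:ℂ)*((k:ℂ)*x^(k-1)))
          ≤ Complex.abs (D - gd x) + Complex.abs ((z:ℂ)*((k:ℂ)*x^(k-1))) :=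
            Complex.abs.add_le _ _
        _ ≤ (k:ℝ)^3*2^k*(2*z) + z*((k:ℝ)*2^k) := by
            gcongr
            · have h2 : Complex.abs (D - gd x) = Complex.abs (gd x - gd ω) := by
                rw [hDdef, AbsoluteValue.map_sub]
              rw [h2]
              calc Complex.abs (gd x - gd ω) ≤ (k:ℝ)^3*2^k * Complex.abs (x - ω) :=
                    hgd_lip x hx
                _ ≤ (k:ℝ)^3*2^k*(2*z) := by
                    have : (0:ℝ) ≤ (k:ℝ)^3*2^k := by positivity
                    exact mul_le_mul_of_nonneg_left hdist this
            · rw [map_mul, map_mul, map_pow]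
              have h1 : Complex.abs (z:ℂ) = z := by
                rw [Complex.abs_ofReal, abs_of_pos hz]
              have h2 : Complex.abs (k:ℂ) = (k:ℝ) := by
                rw [Complex.abs_natCast]
              rw [h1, h2]
              have h3 : Complex.abs x ^ (k-1) ≤ 2^k := by
                calc Complex.abs x ^ (k-1) ≤ 2 ^ (k-1) :=
                      pow_le_pow_left₀ (Complex.abs.nonneg x) hxabs _
                  _ ≤ 2^k := pow_le_pow_right₀ one_le_two (by omega)
              have hk0 : (0:ℝ) ≤ k := hkR.le
              calc z * ((k:ℝ) * Complex.abs x ^ (k-1)) ≤ z * ((k:ℝ) * 2^k) := by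
                    apply mul_le_mul_of_nonneg_left _ hz.le
                    exact mul_le_mul_of_nonneg_left h3 hk0
                _ = z * ((k:ℝ)*2^k) := rfl
    rw [hΦd_eq]
    have : ‖(D - gd x + (z:ℂ)*((k:ℂ)*x^(k-1))) / D‖
        = Complex.abs (D - gd x + (z:ℂ)*((k:ℂ)*x^(k-1))) / Complex.abs D := by
      rw [Complex.norm_eq_abs, map_div₀]
    rw [this]
    have hD2 : (0:ℝ) < (k:ℝ)/2 := by linarith
    calc Complex.abs (D - gd x + (z:ℂ)*((k:ℂ)*x^(k-1))) / Complex.abs D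
        ≤ ((k:ℝ)^3*2^k*(2*z) + z*((k:ℝ)*2^k)) / ((k:ℝ)/2) :=
          div_le_div₀ (by positivity) hnum hD2 hDabs
      _ ≤ 1/2 := by
          rw [div_le_iff₀ hD2]
          nlinarith
  -- Lipschitz
  have hlip : LipschitzOnWith (1/2 : NNReal) Φ (closedBall ω (2*z)) := by
    apply LipschitzOnWith.of_dist_le_mul
    intro x hx y hy
    rw [Complex.dist_eq, Complex.dist_eq]
    have := mvt_ball (fun y _ => hΦderiv y) hΦbound hy hx
    rw [Complex.norm_eq_abs, Complex.norm_eq_abs] at this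
    calc Complex.abs (Φ x - Φ y) ≤ 1/2 * Complex.abs (x - y) := this
      _ = ((1/2 : NNReal):ℝ) * Complex.abs (x - y) := by norm_num
  -- Φ ω near ω
  have hΦω : Φ ω - ω = (z:ℂ)/D := by
    show ω - (g ω - (z:ℂ)*ω^k)/D - ω = (z:ℂ)/D
    rw [show g ω = 0 from hgω, hωk]
    field_simp
    ring
  have hΦωabs : Complex.abs (Φ ω - ω) ≤ z := by
    rw [hΦω, map_div₀]
    have h1 : Complex.abs (z:ℂ) = z := by rw [Complex.abs_ofReal, abs_of_pos hz]
    rw [h1]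
    rw [div_le_iff₀ (by linarith : (0:ℝ) < Complex.abs D)]
    have hk2 : (2:ℝ) ≤ k := by exact_mod_cast hk
    have hD1 : (1:ℝ) ≤ Complex.abs D := by linarith
    nlinarith [mul_nonneg hz.le (sub_nonneg.mpr hD1)]
  -- MapsTo
  have hmaps : MapsTo Φ (closedBall ω (2*z)) (closedBall ω (2*z)) := by
    intro x hx
    rw [mem_closedBall, Complex.dist_eq]
    have h1 : Complex.abs (Φ x - Φ ω) ≤ 1/2 * Complex.abs (x - ω) := by
      have := mvt_ball (fun y _ => hΦderiv y) hΦbound (mem_closedBall_self (by positivity)) hx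
      rw [Complex.norm_eq_abs, Complex.norm_eq_abs] at this
      exact this
    have hdist : Complex.abs (x - ω) ≤ 2*z := by
      rw [mem_closedBall, Complex.dist_eq] at hx; exact hx
    calc Complex.abs (Φ x - ω) = Complex.abs ((Φ x - Φ ω) + (Φ ω - ω)) :=
          (congrArg Complex.abs (sub_add_sub_cancel _ _ _)).symm
      _ ≤ Complex.abs (Φ x - Φ ω) + Complex.abs (Φ ω - ω) := Complex.abs.add_le _ _
      _ ≤ 1/2 * (2*z) + z := by linarith [h1, hdist, hΦωabs]
      _ = 2*z := by ring
  obtain ⟨l, hl, hfix⟩ := fixedpt_ball Φ ω (2*z) (by positivity) hmaps hlip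
  have hroot : g l = (z:ℂ) * l^k := by
    have h1 : l - (g l - (z:ℂ)*l^k)/D = l := hfix
    have h2 : (g l - (z:ℂ)*l^k)/D = 0 := by linear_combination -h1
    rcases div_eq_zero_iff.mp h2 with h | h
    · linear_combination h
    · exact absurd h hD0
  refine ⟨l, ?_, hroot⟩
  rw [mem_closedBall, Complex.dist_eq] at hl
  exact hl

private lemma big_root {k : ℕ} (hk : 2 ≤ k) {z : ℝ} (hz : 0 < z) (hz10 : z ≤ 1/10)
    (hzq : 8 * (k:ℝ) * z^2 ≤ 1/2) :
    ∃ l : ℂ, Complex.abs ((z:ℂ) * l - 1) ≤ 5 * z ∧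
      ∑ i ∈ Finset.range k, l ^ i = (z:ℂ) * l ^ k := by
  have hz0 : (z:ℂ) ≠ 0 := by exact_mod_cast hz.ne'
  have hkR : (0:ℝ) < k := by positivity
  set m : ℝ := z⁻¹ / 2 with hmdef
  have h10 : (10:ℝ) ≤ z⁻¹ := by
    rw [show (10:ℝ) = (1/10)⁻¹ by norm_num]
    exact inv_anti₀ hz hz10
  have hm5 : 5 ≤ m := by rw [hmdef]; linarith
  have hm1 : 1 ≤ m := by linarith
  have hm0 : 0 < m := by linarith
  have hzinv : Complex.abs ((z:ℂ)⁻¹) = z⁻¹ := by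
    rw [map_inv₀, Complex.abs_ofReal, abs_of_pos hz]
  -- points in the ball have modulus ≥ m
  have hball : ∀ x ∈ closedBall ((z:ℂ)⁻¹) 5, m ≤ Complex.abs x := by
    intro x hx
    rw [mem_closedBall, Complex.dist_eq, Complex.norm_eq_abs] at hx
    have h1 := norm_sub_norm_le ((z:ℂ)⁻¹) x
    rw [norm_sub_rev] at h1
    rw [Complex.norm_eq_abs, Complex.norm_eq_abs, Complex.norm_eq_abs, hzinv] at h1
    rw [hmdef]
    linarith
  set Ψ : ℂ → ℂ := fun x => (z:ℂ)⁻¹ * (1 - (x^k)⁻¹) + 1 with hΨdef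
  set Ψd : ℂ → ℂ := fun x => (z:ℂ)⁻¹ * (((k:ℂ) * x^(k-1)) / (x^k)^2) with hΨddef
  have hΨderiv : ∀ x ∈ closedBall ((z:ℂ)⁻¹) 5, HasDerivAt Ψ (Ψd x) x := by
    intro x hx
    have hx0 : x ≠ 0 := by
      intro h
      have := hball x hx
      rw [h, map_zero] at this
      linarith
    have hxk0 : x^k ≠ 0 := pow_ne_zero k hx0
    have h1 : HasDerivAt (fun x : ℂ => (x^k)⁻¹) (-((k:ℂ) * x^(k-1)) / (x^k)^2) x :=
      (hasDerivAt_pow k x).inv hxk0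
    have h2 : HasDerivAt (fun x : ℂ => 1 - (x^k)⁻¹) (-(-((k:ℂ) * x^(k-1)) / (x^k)^2)) x :=
      h1.const_sub 1
    have h3 := (h2.const_mul ((z:ℂ)⁻¹)).add_const 1
    refine h3.congr_deriv ?_
    rw [hΨddef]
    ring
  -- derivative bound
  have hΨbound : ∀ x ∈ closedBall ((z:ℂ)⁻¹) 5, ‖Ψd x‖ ≤ 1/2 := by
    intro x hx
    have ht := hball x hx
    set t : ℝ := Complex.abs x with htdef
    have ht0 : 0 < t := lt_of_lt_of_le hm0 ht
    have habs : ‖Ψd x‖ = z⁻¹ * ((k:ℝ) * t^(k-1) / (t^k)^2) := by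
      rw [hΨddef]
      simp only [Complex.norm_eq_abs, map_mul, map_div₀, map_pow, map_inv₀,
        Complex.abs_ofReal, Complex.abs_natCast, abs_of_pos hz]
      rfl
    rw [habs]
    have hsplit : (t^k)^2 = t^(k-1) * t^(k+1) := by
      rw [← pow_mul, ← pow_add]
      congr 1
      omega
    have key : (k:ℝ)*t^(k-1)/(t^k)^2 = (k:ℝ)/t^(k+1) := by
      rw [hsplit, mul_comm (t^(k-1)) (t^(k+1))]
      exact mul_div_mul_right _ _ (pow_ne_zero _ ht0.ne')
    rw [key]
    have hm3 : m^3 ≤ t^(k+1) := by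
      calc m^3 ≤ m^(k+1) := pow_le_pow_right₀ hm1 (by omega)
        _ ≤ t^(k+1) := pow_le_pow_left₀ hm0.le ht _
    have hzm : z⁻¹ = 2*m := by rw [hmdef]; ring
    calc z⁻¹ * ((k:ℝ)/t^(k+1)) ≤ (2*m) * ((k:ℝ)/m^3) := by
          rw [hzm]
          gcongr
        _ = 8 * (k:ℝ) * z^2 := by
          rw [hmdef]
          field_simp
          ring
        _ ≤ 1/2 := hzq
  -- MapsTo
  have hmaps : MapsTo Ψ (closedBall ((z:ℂ)⁻¹) 5) (closedBall ((z:ℂ)⁻¹) 5) := by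
    intro x hx
    have ht := hball x hx
    have ht0 : 0 < Complex.abs x := lt_of_lt_of_le hm0 ht
    rw [mem_closedBall, Complex.dist_eq]
    have heq : Ψ x - (z:ℂ)⁻¹ = 1 - (z:ℂ)⁻¹ * (x^k)⁻¹ := by rw [hΨdef]; ring
    rw [heq]
    have hmk : m^2 ≤ Complex.abs x ^ k := by
      calc m^2 ≤ m^k := pow_le_pow_right₀ hm1 (by omega)
        _ ≤ Complex.abs x ^ k := pow_le_pow_left₀ hm0.le ht _
    have h2 : Complex.abs ((z:ℂ)⁻¹ * (x^k)⁻¹) ≤ 2/m := by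
      have e1 : Complex.abs ((z:ℂ)⁻¹ * (x^k)⁻¹) = z⁻¹ * (Complex.abs x ^ k)⁻¹ := by
        rw [map_mul, hzinv, map_inv₀, map_pow]
      rw [e1]
      have hzm : z⁻¹ = 2*m := by rw [hmdef]; ring
      rw [hzm]
      calc 2*m * (Complex.abs x ^ k)⁻¹ ≤ 2*m * (m^2)⁻¹ := by
            gcongr
        _ = 2/m := by field_simp
    have hsub := norm_sub_le (1:ℂ) ((z:ℂ)⁻¹ * (x^k)⁻¹)
    rw [norm_one, Complex.norm_eq_abs, Complex.norm_eq_abs] at hsub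
    calc Complex.abs (1 - (z:ℂ)⁻¹ * (x^k)⁻¹)
        ≤ 1 + Complex.abs ((z:ℂ)⁻¹ * (x^k)⁻¹) := hsub
      _ ≤ 1 + 2/m := by linarith [h2]
      _ ≤ 5 := by
          have : 2/m ≤ 2/5 := by
            apply div_le_div_of_nonneg_left (by norm_num) (by norm_num) hm5
          linarith
  -- Lipschitz
  have hlip : LipschitzOnWith (1/2 : NNReal) Ψ (closedBall ((z:ℂ)⁻¹) 5) := by
    apply LipschitzOnWith.of_dist_le_mul
    intro x hx y hy
    rw [Complex.dist_eq, Complex.dist_eq]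
    have := mvt_ball hΨderiv hΨbound hy hx
    rw [Complex.norm_eq_abs, Complex.norm_eq_abs] at this
    calc Complex.abs (Ψ x - Ψ y) ≤ 1/2 * Complex.abs (x - y) := this
      _ = ((1/2 : NNReal):ℝ) * Complex.abs (x - y) := by norm_num
  obtain ⟨l, hl, hfix⟩ := fixedpt_ball Ψ ((z:ℂ)⁻¹) 5 (by norm_num) hmaps hlip
  have hlm := hball l hl
  have hl0 : l ≠ 0 := by
    intro h; rw [h, map_zero] at hlm; linarith
  have hlk0 : l^k ≠ 0 := pow_ne_zero k hl0
  have hl1 : l ≠ 1 := by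
    intro h
    rw [h, map_one] at hlm
    linarith
  have heq : (z:ℂ)⁻¹ * (1 - (l^k)⁻¹) + 1 = l := hfix
  have hz1 : (z:ℂ) * (z:ℂ)⁻¹ = 1 := mul_inv_cancel₀ hz0
  have hlk1 : l^k * (l^k)⁻¹ = 1 := mul_inv_cancel₀ hlk0
  have hpoly : (z:ℂ) * l^k * (l - 1) = l^k - 1 := by
    linear_combination (-(z:ℂ) * l^k) * heq + ((l^k) * (1 - (l^k)⁻¹)) * hz1 + (-1) * hlk1
  have hsum : (∑ i ∈ Finset.range k, l ^ i) = (z:ℂ) * l ^ k := by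
    have hgm := geom_sum_mul l k
    have h2 : (∑ i ∈ Finset.range k, l ^ i) * (l - 1) = ((z:ℂ) * l^k) * (l - 1) := by
      rw [hgm, ← hpoly]
    exact mul_right_cancel₀ (sub_ne_zero.mpr hl1) h2
  refine ⟨l, ?_, hsum⟩
  have h3 : (z:ℂ) * l - 1 = (z:ℂ) * (l - (z:ℂ)⁻¹) := by
    rw [mul_sub, hz1]
  rw [h3, map_mul, Complex.abs_ofReal, abs_of_pos hz]
  rw [mem_closedBall, Complex.dist_eq] at hl
  calc z * Complex.abs (l - (z:ℂ)⁻¹) ≤ z * 5 := by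
        exact mul_le_mul_of_nonneg_left hl hz.le
    _ = 5 * z := by ring


/-- For small `z > 0`, `λ^k - z⁻¹ (λ^{k-1} + ⋯ + λ + 1)` has one root
`λ = z⁻¹ (1 + O_k(z))` and, for each `k`-th root of unity `ω ≠ 1`, a root
`λ = ω (1 + O_k(z))`, all distinct. -/
theorem stmt_16 (k : ℕ) (hk : 2 ≤ k) :
    ∃ Ck : ℝ, 0 < Ck ∧ ∃ δ : ℝ, 0 < δ ∧ ∀ z : ℝ, 0 < z → z < δ →
      (∃ lam : ℂ,
        (X ^ k - C ((z : ℂ))⁻¹ * ∑ i ∈ Finset.range k, X ^ i : Polynomial ℂ).IsRoot lam ∧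
        ∃ E : ℂ, ‖E‖ ≤ Ck * z ∧ lam = ((z : ℂ))⁻¹ * (1 + E)) ∧
      ∃ lam : ℂ → ℂ, Set.InjOn lam {ω : ℂ | ω ^ k = 1 ∧ ω ≠ 1} ∧
        ∀ ω : ℂ, ω ^ k = 1 → ω ≠ 1 →
          (X ^ k - C ((z : ℂ))⁻¹ * ∑ i ∈ Finset.range k, X ^ i : Polynomial ℂ).IsRoot (lam ω) ∧
          ∃ E : ℂ, ‖E‖ ≤ Ck * z ∧ lam ω = ω * (1 + E) := by
  have hk1 : (1:ℝ) ≤ k := by exact_mod_cast Nat.one_le_of_lt hk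
  have hkR : (0:ℝ) < k := by linarith
  have hk2 : (2:ℝ) ≤ k := by exact_mod_cast hk
  refine ⟨5, by norm_num, 1 / (2^(k+4) * (k:ℝ)^3 * 10), by positivity, ?_⟩
  intro z hz hzδ
  set N : ℝ := 2^(k+4) * (k:ℝ)^3 * 10 with hN
  have hN0 : (0:ℝ) < N := by positivity
  have hzN : z < 1/N := hzδ
  have hz0 : (z:ℂ) ≠ 0 := by exact_mod_cast hz.ne'
  have hp1 : (1:ℝ) ≤ 2^(k+4) := one_le_pow₀ one_le_two
  have hk3 : (1:ℝ) ≤ (k:ℝ)^3 := one_le_pow₀ hk1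
  have hkk : (k:ℝ) ≤ (k:ℝ)^3 := by
    have h1 : (0:ℝ) ≤ (k:ℝ) * ((k:ℝ) - 1) * ((k:ℝ) + 1) :=
      mul_nonneg (mul_nonneg hkR.le (by linarith)) (by linarith)
    nlinarith
  have hN10 : (10:ℝ) ≤ N := by rw [hN]; nlinarith
  have hδ1 : z ≤ 1/10 := le_trans hzN.le (by
    apply one_div_le_one_div_of_le (by norm_num) hN10)
  have hδ2 : z ≤ 1/2 := by linarith
  have h34 : (2:ℝ)^(k+4) = 2^(k+3) * 2 := pow_succ 2 (k+3)
  have hδ3 : (2:ℝ)^(k+3) * (k:ℝ)^3 * z ≤ 1/2 := by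
    have h1 : (2:ℝ)^(k+3) * (k:ℝ)^3 * z ≤ 2^(k+3) * (k:ℝ)^3 * (1/N) :=
      mul_le_mul_of_nonneg_left hzN.le (by positivity)
    have h2 : (2:ℝ)^(k+3) * (k:ℝ)^3 * (1/N) = 1/20 := by
      rw [hN, h34]
      have hq1 : (2:ℝ)^(k+3) ≠ 0 := by positivity
      have hq2 : (k:ℝ)^3 ≠ 0 := by positivity
      field_simp
      ring
    linarith
  have hN16 : 16*(k:ℝ) ≤ N := by
    have hsq : (4:ℝ) ≤ (k:ℝ)^2 := by nlinarith
    have e1 : 16*(k:ℝ) ≤ 10*(k:ℝ)^3 := by nlinarith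
    have e2 : 10*(k:ℝ)^3 ≤ N := by
      rw [hN]
      nlinarith [mul_nonneg (sub_nonneg.mpr hp1) (by positivity : (0:ℝ) ≤ (k:ℝ)^3*10)]
    linarith
  have h16 : 16*(k:ℝ)*z ≤ 1 := by
    have h1 : z ≤ 1/(16*(k:ℝ)) :=
      le_trans hzN.le (one_div_le_one_div_of_le (by positivity) hN16)
    have h2 : (0:ℝ) < 16*(k:ℝ) := by positivity
    calc 16*(k:ℝ)*z ≤ 16*(k:ℝ)*(1/(16*(k:ℝ))) := mul_le_mul_of_nonneg_left h1 h2.le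
      _ = 1 := by field_simp
  have hδ4 : 8*(k:ℝ)*z^2 ≤ 1/2 := by nlinarith
  have hN4 : 4*(k:ℝ) ≤ N := by linarith
  have hδ5 : 4*z < 1/(k:ℝ) := by
    have h1 : z < 1/(4*(k:ℝ)) :=
      lt_of_lt_of_le hzN (one_div_le_one_div_of_le (by positivity) hN4)
    rw [lt_div_iff₀ (by positivity : (0:ℝ) < 4*(k:ℝ))] at h1
    rw [lt_div_iff₀ hkR]
    linarith
  -- root evaluation helper
  have isroot : ∀ l : ℂ, (∑ i ∈ Finset.range k, l^i = (z:ℂ)*l^k) →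
      (X ^ k - C ((z : ℂ))⁻¹ * ∑ i ∈ Finset.range k, X ^ i : Polynomial ℂ).IsRoot l := by
    intro l hsum
    simp only [Polynomial.IsRoot, Polynomial.eval_sub, Polynomial.eval_pow, Polynomial.eval_X,
      Polynomial.eval_mul, Polynomial.eval_C, Polynomial.eval_finset_sum]
    rw [hsum, inv_mul_cancel_left₀ hz0, sub_self]
  constructor
  · -- big root
    obtain ⟨l, hE, hsum⟩ := big_root hk hz hδ1 hδ4
    refine ⟨l, isroot l hsum, (z:ℂ)*l - 1, ?_, ?_⟩
    · calc Complex.abs ((z:ℂ)*l - 1) ≤ 5*z := hE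
        _ = 5*z := rfl
    · rw [add_sub_cancel, inv_mul_cancel_left₀ hz0]
  · -- small roots
    have key : ∀ ω : ℂ, ω^k = 1 ∧ ω ≠ 1 → ∃ l : ℂ, Complex.abs (l - ω) ≤ 2*z ∧
        ∑ i ∈ Finset.range k, l^i = (z:ℂ) * l^k :=
      fun ω h => small_root hk hz hδ2 hδ3 h.1 h.2
    classical
    refine ⟨fun ω => if h : ω^k = 1 ∧ ω ≠ 1 then (key ω h).choose else ω, ?_, ?_⟩
    · -- injectivity
      intro a ha b hb hab
      by_contra hne
      have hA : (a:ℂ)^k = 1 ∧ a ≠ 1 := ha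
      have hB : (b:ℂ)^k = 1 ∧ b ≠ 1 := hb
      simp only [dif_pos hA, dif_pos hB] at hab
      have h1 := (key a hA).choose_spec.1
      have h2 := (key b hB).choose_spec.1
      have hsep : 1/(k:ℝ) ≤ Complex.abs (a - b) := sep_pair hk hA.1 hB.1 hne
      have hcb : a - b = ((key b hB).choose - b) - ((key a hA).choose - a) := by
        rw [← hab]; ring
      have h3 : Complex.abs (a - b) ≤ 4*z := by
        rw [hcb]
        calc Complex.abs (((key b hB).choose - b) - ((key a hA).choose - a))
            ≤ Complex.abs ((key b hB).choose - b) + Complex.abs ((key a hA).choose - a) := by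
              have := norm_sub_le ((key b hB).choose - b) ((key a hA).choose - a)
              simpa [Complex.norm_eq_abs] using this
          _ ≤ 2*z + 2*z := add_le_add h2 h1
          _ = 4*z := by ring
      linarith
    · intro ω hω1 hω2
      have hA : (ω:ℂ)^k = 1 ∧ ω ≠ 1 := ⟨hω1, hω2⟩
      simp only [dif_pos hA]
      obtain ⟨hcl, hsum⟩ := (key ω hA).choose_spec
      have hωabs : Complex.abs ω = 1 := root_abs_one (by omega) hω1
      have hω0 : ω ≠ 0 := by
        intro h; rw [h, map_zero] at hωabs; norm_num at hωabs
      refine ⟨isroot _ hsum, (key ω hA).choose / ω - 1, ?_, ?_⟩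
      · have heq : (key ω hA).choose / ω - 1 = ((key ω hA).choose - ω)/ω := by
          field_simp
        rw [heq, Complex.norm_eq_abs, map_div₀, hωabs, div_one]
        calc Complex.abs ((key ω hA).choose - ω) ≤ 2*z := hcl
          _ ≤ 5*z := by linarith
      · rw [add_sub_cancel, mul_div_cancel₀ _ hω0]
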